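/- Let m be an integer with m ≠ 1 and let g : ℝ → ℝ be continuous with g(x+1) = g(x) + m for all x ∈ ℝ. Then there exist at least |m − 1| distinct points x ∈ [0,1) such that g(x) − x is an integer. (A continuous degree-m circle map has at least |m − 1| fixed points.) -/
import Mathlib


open Set

lemma aux_fixed_points (f : ℝ → ℝ) (hf : Continuous f) (d : ℤ) (hd : 0 < d)
    (hfd : f 1 = f 0 + d) :
    ∃ s : Finset ℝ, d.natAbs ≤ s.card ∧ ↑s ⊆ Ico (0 : ℝ) 1 ∧
      ∀ x ∈ s, ∃ j : ℤ, f x = j := by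
  have key : ∀ k : Fin d.natAbs, ∃ x ∈ Ico (0 : ℝ) 1, f x = (⌈f 0⌉ : ℝ) + k := by
    rintro ⟨k, hk⟩
    have hk' : (k : ℝ) ≤ (d : ℝ) - 1 := by
      have : (k : ℤ) ≤ d - 1 := by
        have : (k : ℤ) < d.natAbs := by exact_mod_cast hk
        omega
      exact_mod_cast this
    have hub : (⌈f 0⌉ : ℝ) + k < f 1 := by
      rw [hfd]
      have h1 : (⌈f 0⌉ : ℝ) < f 0 + 1 := by
        exact_mod_cast Int.ceil_lt_add_one (f 0)
      linarith
    rcases eq_or_lt_of_le (Int.le_ceil (f 0)) with h0 | h0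
    · rcases Nat.eq_zero_or_pos k with rfl | hkpos
      · exact ⟨0, ⟨le_refl 0, one_pos⟩, by simp [← h0]⟩
      · have hlb : f 0 < (⌈f 0⌉ : ℝ) + k := by
          have : (0 : ℝ) < k := by exact_mod_cast hkpos
          linarith [h0.symm.le]
        have := intermediate_value_Icc (by norm_num : (0:ℝ) ≤ 1) hf.continuousOn
          (mem_Icc.mpr ⟨le_of_lt hlb, le_of_lt hub⟩)
        rcases this with ⟨x, hx, hfx⟩
        refine ⟨x, ⟨hx.1, lt_of_le_of_ne hx.2 ?_⟩, hfx⟩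
        rintro rfl; exact absurd hfx (ne_of_lt hub).symm
    · have hlb : f 0 < (⌈f 0⌉ : ℝ) + k := by
        have : (0 : ℝ) ≤ k := by positivity
        linarith
      have := intermediate_value_Icc (by norm_num : (0:ℝ) ≤ 1) hf.continuousOn
        (mem_Icc.mpr ⟨le_of_lt hlb, le_of_lt hub⟩)
      rcases this with ⟨x, hx, hfx⟩
      refine ⟨x, ⟨hx.1, lt_of_le_of_ne hx.2 ?_⟩, hfx⟩
      rintro rfl; exact absurd hfx (ne_of_lt hub).symm
  choose x hx hfx using key
  have hinj : Function.Injective x := by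
    intro i j hij
    have : ((i : ℕ) : ℝ) = ((j : ℕ) : ℝ) := by
      have := hfx i; rw [hij, hfx j] at this; linarith
    have : (i : ℕ) = (j : ℕ) := by exact_mod_cast this
    exact Fin.ext this
  refine ⟨Finset.image x Finset.univ, ?_, ?_, ?_⟩
  · rw [Finset.card_image_of_injective _ hinj, Finset.card_univ, Fintype.card_fin]
  · intro y hy
    simp only [Finset.coe_image, Finset.coe_univ, Set.image_univ] at hy
    rcases hy with ⟨i, rfl⟩
    exact hx i
  · intro y hy
    simp only [Finset.mem_image] at hy
    rcases hy with ⟨i, _, rfl⟩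
    exact ⟨⌈f 0⌉ + i, by rw [hfx i]; push_cast; ring⟩

/-- A continuous degree-`m` circle map with `m ≠ 1` has at least `|m - 1|` fixed points:
if `g` is a lift, there are at least `|m - 1|` points `x ∈ [0,1)` with `g x - x ∈ ℤ`. -/
theorem circle_map_fixed_points (m : ℤ) (hm : m ≠ 1) (g : ℝ → ℝ) (hg : Continuous g)
    (hlift : ∀ x : ℝ, g (x + 1) = g x + m) :
    ∃ s : Finset ℝ, (m - 1).natAbs ≤ s.card ∧ ↑s ⊆ Ico (0 : ℝ) 1 ∧
      ∀ x ∈ s, ∃ j : ℤ, g x - x = j := by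
  set f : ℝ → ℝ := fun x => g x - x with hfdef
  have hfc : Continuous f := hg.sub continuous_id
  have hf1 : f 1 = f 0 + ((m - 1 : ℤ) : ℝ) := by
    have := hlift 0
    simp only [hfdef]
    push_cast
    rw [zero_add] at this
    rw [this]; ring
  rcases lt_trichotomy (m - 1) 0 with h | h | h
  · have hneg : (-f) 1 = (-f) 0 + (1 - m : ℤ) := by
      simp only [Pi.neg_apply]
      push_cast
      rw [hf1]; push_cast; ring
    obtain ⟨s, hcard, hsub, hint⟩ := aux_fixed_points (-f) hfc.neg (1 - m) (by omega) hneg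
    refine ⟨s, ?_, hsub, ?_⟩
    · have : (1 - m).natAbs = (m - 1).natAbs := by omega
      omega
    · intro y hy
      rcases hint y hy with ⟨j, hj⟩
      refine ⟨-j, ?_⟩
      simp only [hfdef, Pi.neg_apply] at hj
      push_cast
      linarith
  · omega
  · obtain ⟨s, hcard, hsub, hint⟩ := aux_fixed_points f hfc (m - 1) h hf1
    exact ⟨s, hcard, hsub, hint⟩
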